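/- arXiv:2505.00792 — 3 statements merged into one kernel-verified Lean document; each statement's English description precedes it below -/
import Mathlib

section
/- Let N, E ≥ 1, let a : Fin N → ℝ have a unique maximizer j*, and for each j let r j : Fin E → ℝ be a probability vector. Fix an index i and assume H(r j) ≤ H(r i) for every j. For τ > 0 define the mixture p_τ e = Σ_j σ_τ(j) · r j e, where σ_τ(j) = exp(a j / τ) / Σ_k exp(a k / τ). Then H(p_τ) converges to H(r j*) as τ → 0⁺, and in particular lim_{τ→0⁺} H(p_τ) ≤ H(r i). -/
open Finset Real Filter

/-- Shannon entropy of a finitely supported vector, with the convention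
`0 * log 0 = 0` (which holds since `Real.log 0 = 0`). -/
noncomputable def shannonEntropy {α : Type*} [Fintype α] (q : α → ℝ) : ℝ :=
  -∑ a, q a * Real.log (q a)

/-- As the temperature `τ → 0⁺`, the entropy of the softmax-weighted mixture
`p_τ e = ∑ j, σ_τ(j) * r j e` converges to `H (r jstar)`; in particular, since
`H (r j) ≤ H (r i)` for all `j`, the limit is at most `H (r i)`. -/
theorem entropy_softmax_mixture_tendsto {N E : ℕ} (hN : 1 ≤ N) (hE : 1 ≤ E)
    (a : Fin N → ℝ) (jstar : Fin N) (hmax : ∀ j, j ≠ jstar → a j < a jstar)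
    (r : Fin N → Fin E → ℝ) (hr0 : ∀ j e, 0 ≤ r j e) (hr1 : ∀ j, ∑ e, r j e = 1)
    (i : Fin N) (hent : ∀ j, shannonEntropy (r j) ≤ shannonEntropy (r i)) :
    Tendsto
      (fun τ : ℝ =>
        shannonEntropy (fun e : Fin E =>
          ∑ j, (Real.exp (a j / τ) / ∑ k, Real.exp (a k / τ)) * r j e))
      (nhdsWithin 0 (Set.Ioi 0)) (nhds (shannonEntropy (r jstar))) ∧
    shannonEntropy (r jstar) ≤ shannonEntropy (r i) := by
  refine ⟨?_, hent jstar⟩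
  -- limits of the centered exponentials
  have hterm : ∀ j : Fin N, Tendsto (fun τ : ℝ => Real.exp ((a j - a jstar) / τ))
      (nhdsWithin 0 (Set.Ioi 0)) (nhds (if j = jstar then 1 else 0)) := by
    intro j
    by_cases hj : j = jstar
    · subst hj; simp
    · simp only [hj, if_false]
      have hc : a j - a jstar < 0 := sub_neg.mpr (hmax j hj)
      have h1 : Tendsto (fun τ : ℝ => (a j - a jstar) / τ)
          (nhdsWithin 0 (Set.Ioi 0)) atBot := by
        simp only [div_eq_mul_inv]
        exact (tendsto_const_mul_atBot_of_neg hc).mpr tendsto_inv_nhdsGT_zero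
      exact Real.tendsto_exp_atBot.comp h1
  have hden : Tendsto (fun τ : ℝ => ∑ k, Real.exp ((a k - a jstar) / τ))
      (nhdsWithin 0 (Set.Ioi 0)) (nhds 1) := by
    have := tendsto_finset_sum (Finset.univ : Finset (Fin N)) (fun k _ => hterm k)
    simpa using this
  have hσ : ∀ j : Fin N, Tendsto (fun τ : ℝ => Real.exp (a j / τ) / ∑ k, Real.exp (a k / τ))
      (nhdsWithin 0 (Set.Ioi 0)) (nhds (if j = jstar then 1 else 0)) := by
    intro j
    have hlim := ((hterm j).div hden one_ne_zero)
    rw [div_one] at hlim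
    refine hlim.congr' ?_
    filter_upwards [self_mem_nhdsWithin] with τ (hτ : 0 < τ)
    have hw : Real.exp (-(a jstar / τ)) ≠ 0 := Real.exp_ne_zero _
    have hk : ∀ k : Fin N, Real.exp ((a k - a jstar) / τ)
        = Real.exp (a k / τ) * Real.exp (-(a jstar / τ)) := by
      intro k
      rw [← Real.exp_add, sub_div]
      ring_nf
    simp only [Pi.div_apply]
    rw [hk j]
    have : (∑ k, Real.exp ((a k - a jstar) / τ))
        = (∑ k, Real.exp (a k / τ)) * Real.exp (-(a jstar / τ)) := by
      rw [Finset.sum_mul]; exact Finset.sum_congr rfl fun k _ => hk k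
    rw [this, mul_div_mul_right _ _ hw]
  have hp : ∀ e : Fin E, Tendsto
      (fun τ : ℝ => ∑ j, (Real.exp (a j / τ) / ∑ k, Real.exp (a k / τ)) * r j e)
      (nhdsWithin 0 (Set.Ioi 0)) (nhds (r jstar e)) := by
    intro e
    have := tendsto_finset_sum (Finset.univ : Finset (Fin N))
      (fun j _ => (hσ j).mul_const (r j e))
    simpa [Finset.sum_ite_eq'] using this
  unfold shannonEntropy
  refine Tendsto.neg (tendsto_finset_sum _ fun e _ => ?_)
  exact (Real.continuous_mul_log.tendsto (r jstar e)).comp (hp e)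
end

section
/- Let N ≥ 1, D ≥ 1, u ∈ ℝ^D, m : Fin N → ℝ^D, and w : Fin N → ℝ with w j > 0 for all j, and suppose ‖u − m j*‖ < ‖u − m j‖ for all j ≠ j* for some index j*. For σ > 0 let q_σ(j) = w j · exp(−‖u − m j‖² / (2σ²)) / Σ_k w k · exp(−‖u − m k‖² / (2σ²)). Then the Shannon entropy H(q_σ) = −Σ_j q_σ(j) log q_σ(j) tends to 0 as σ → 0⁺. -/
open Finset Real Filter

/-- As `σ → 0⁺`, the Shannon entropy of the Gaussian posterior weights
`q_σ(j) = w j * exp(-‖u - m j‖²/(2σ²)) / ∑ k, w k * exp(-‖u - m k‖²/(2σ²))`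
tends to `0`, the posterior becoming one-hot at the unique nearest mean. -/
theorem entropy_gaussianPosterior_tendsto_zero {N D : ℕ} (hN : 1 ≤ N) (hD : 1 ≤ D)
    (u : EuclideanSpace ℝ (Fin D)) (m : Fin N → EuclideanSpace ℝ (Fin D))
    (w : Fin N → ℝ) (hw : ∀ j, 0 < w j) (jstar : Fin N)
    (hmin : ∀ j, j ≠ jstar → ‖u - m jstar‖ < ‖u - m j‖) :
    Tendsto
      (fun σ : ℝ =>
        shannonEntropy (fun j : Fin N =>
          w j * Real.exp (-‖u - m j‖ ^ 2 / (2 * σ ^ 2)) /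
            ∑ k, w k * Real.exp (-‖u - m k‖ ^ 2 / (2 * σ ^ 2))))
      (nhdsWithin 0 (Set.Ioi 0)) (nhds 0) := by
  have hwpos := hw jstar
  set d : Fin N → ℝ := fun j => ‖u - m j‖ ^ 2 with hd
  set g : ℝ → Fin N → ℝ := fun σ j =>
    (w j / w jstar) * Real.exp ((d jstar - d j) / (2 * σ ^ 2)) with hgdef
  -- limit of each g
  have hsq : Tendsto (fun σ : ℝ => 2 * σ ^ 2) (nhdsWithin 0 (Set.Ioi 0))
      (nhdsWithin 0 (Set.Ioi 0)) := by
    rw [tendsto_nhdsWithin_iff]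
    constructor
    · have : Tendsto (fun σ : ℝ => 2 * σ ^ 2) (nhds 0) (nhds (2 * 0 ^ 2)) := by
        exact (continuous_const.mul (continuous_pow 2)).tendsto 0
      simpa using this.mono_left nhdsWithin_le_nhds
    · filter_upwards [self_mem_nhdsWithin] with σ hσ
      have hσ0 : (0:ℝ) < σ := hσ
      exact Set.mem_Ioi.mpr (by positivity)
  have hg : ∀ j, Tendsto (fun σ : ℝ => g σ j) (nhdsWithin 0 (Set.Ioi 0))
      (nhds (if j = jstar then 1 else 0)) := by
    intro j
    by_cases hj : j = jstar
    · subst hj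
      simp only [if_pos rfl, hgdef, sub_self, zero_div, Real.exp_zero, mul_one,
        div_self (ne_of_gt hwpos)]
      exact tendsto_const_nhds
    · rw [if_neg hj]
      have hc : d jstar - d j < 0 := by
        have := hmin j hj
        have h1 : ‖u - m jstar‖ ^ 2 < ‖u - m j‖ ^ 2 := by
          apply pow_lt_pow_left₀ this (norm_nonneg _)
          norm_num
        simpa [hd] using sub_neg.mpr h1
      have hinv : Tendsto (fun σ : ℝ => (2 * σ ^ 2)⁻¹) (nhdsWithin 0 (Set.Ioi 0)) atTop :=
        tendsto_inv_nhdsGT_zero.comp hsq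
      have hbot : Tendsto (fun σ : ℝ => (d jstar - d j) / (2 * σ ^ 2))
          (nhdsWithin 0 (Set.Ioi 0)) atBot := by
        simp only [div_eq_mul_inv]
        exact (tendsto_const_mul_atBot_of_neg hc).mpr hinv
      have := (Real.tendsto_exp_atBot.comp hbot).const_mul (w j / w jstar)
      simpa [hgdef] using this
  -- sum of g tends to 1
  have hS : Tendsto (fun σ : ℝ => ∑ k, g σ k) (nhdsWithin 0 (Set.Ioi 0)) (nhds 1) := by
    have := tendsto_finset_sum Finset.univ (fun k _ => hg k)
    simpa using this
  -- q equals g/S on Ioi 0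
  have hq : ∀ j, Tendsto (fun σ : ℝ =>
      w j * Real.exp (-‖u - m j‖ ^ 2 / (2 * σ ^ 2)) /
        ∑ k, w k * Real.exp (-‖u - m k‖ ^ 2 / (2 * σ ^ 2)))
      (nhdsWithin 0 (Set.Ioi 0)) (nhds (if j = jstar then 1 else 0)) := by
    intro j
    have hlim := (hg j).div hS one_ne_zero
    rw [div_one] at hlim
    apply hlim.congr'
    filter_upwards [self_mem_nhdsWithin] with σ hσ
    have hσ0 : (0:ℝ) < σ := hσ
    have hs : (0:ℝ) < 2 * σ ^ 2 := by positivity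
    have hgeq : ∀ k, g σ k =
        (w k * Real.exp (-d k / (2 * σ ^ 2))) /
          (w jstar * Real.exp (-d jstar / (2 * σ ^ 2))) := by
      intro k
      have : (d jstar - d k) / (2 * σ ^ 2) =
          (-d k / (2 * σ ^ 2)) - (-d jstar / (2 * σ ^ 2)) := by ring
      rw [hgdef]
      simp only [this, Real.exp_sub]
      rw [div_mul_div_comm]
    have hC : (0:ℝ) < w jstar * Real.exp (-d jstar / (2 * σ ^ 2)) := by positivity
    have hsum : ∑ k, g σ k =
        (∑ k, w k * Real.exp (-d k / (2 * σ ^ 2))) /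
          (w jstar * Real.exp (-d jstar / (2 * σ ^ 2))) := by
      rw [Finset.sum_div]
      exact Finset.sum_congr rfl fun k _ => hgeq k
    have hSN : (0:ℝ) < ∑ k, w k * Real.exp (-d k / (2 * σ ^ 2)) := by
      apply Finset.sum_pos
      · intro k _; exact mul_pos (hw k) (Real.exp_pos _)
      · exact Finset.univ_nonempty_iff.mpr ⟨jstar⟩
    simp only [Pi.div_apply]
    rw [hgeq j, hsum]
    rw [div_div_div_cancel_right₀ hC.ne']
  -- entropy tends to 0
  have hterm : ∀ j, Tendsto (fun σ : ℝ =>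
      (fun x : ℝ => x * Real.log x)
        (w j * Real.exp (-‖u - m j‖ ^ 2 / (2 * σ ^ 2)) /
          ∑ k, w k * Real.exp (-‖u - m k‖ ^ 2 / (2 * σ ^ 2))))
      (nhdsWithin 0 (Set.Ioi 0))
      (nhds ((if j = jstar then 1 else 0) * Real.log (if j = jstar then 1 else 0))) := by
    intro j
    exact (Real.continuous_mul_log.continuousAt).tendsto.comp (hq j)
  have hsum := tendsto_finset_sum Finset.univ (fun j (_ : j ∈ Finset.univ) => hterm j)
  have hval : (∑ j : Fin N, (if j = jstar then (1:ℝ) else 0) *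
      Real.log (if j = jstar then 1 else 0)) = 0 := by
    apply Finset.sum_eq_zero
    intro j _
    by_cases hj : j = jstar <;> simp [hj]
  rw [hval] at hsum
  have := hsum.neg
  rw [neg_zero] at this
  simpa [shannonEntropy] using this
end

section
/- Let N, E ≥ 1, D ≥ 1, u ∈ ℝ^D, m : Fin N → ℝ^D, w : Fin N → ℝ with w j > 0, and suppose there is a unique j* with ‖u − m j*‖ < ‖u − m j‖ for all j ≠ j*. For each j let r j : Fin E → ℝ be a probability vector, fix an index i, and assume H(r j) ≤ H(r i) for every j. For σ > 0 set q_σ(j) = w j · exp(−‖u − m j‖² / (2σ²)) / Σ_k w k · exp(−‖u − m k‖² / (2σ²)) and p_σ e = Σ_j q_σ(j) · r j e. Then H(p_σ) converges to H(r j*) as σ → 0⁺, and in particular lim_{σ→0⁺} H(p_σ) ≤ H(r i). -/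
open Finset Real Filter

/-- As `σ → 0⁺`, the entropy of the Gaussian-posterior-weighted mixture
`p_σ e = ∑ j, q_σ(j) * r j e` converges to `H (r jstar)`; in particular, since
`H (r j) ≤ H (r i)` for all `j`, the limit is at most `H (r i)`. -/
theorem entropy_gaussianPosterior_mixture_tendsto {N E D : ℕ}
    (hN : 1 ≤ N) (hE : 1 ≤ E) (hD : 1 ≤ D)
    (u : EuclideanSpace ℝ (Fin D)) (m : Fin N → EuclideanSpace ℝ (Fin D))
    (w : Fin N → ℝ) (hw : ∀ j, 0 < w j) (jstar : Fin N)
    (hmin : ∀ j, j ≠ jstar → ‖u - m jstar‖ < ‖u - m j‖)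
    (r : Fin N → Fin E → ℝ) (hr0 : ∀ j e, 0 ≤ r j e) (hr1 : ∀ j, ∑ e, r j e = 1)
    (i : Fin N) (hent : ∀ j, shannonEntropy (r j) ≤ shannonEntropy (r i)) :
    Tendsto
      (fun σ : ℝ =>
        shannonEntropy (fun e : Fin E =>
          ∑ j, (w j * Real.exp (-‖u - m j‖ ^ 2 / (2 * σ ^ 2)) /
              ∑ k, w k * Real.exp (-‖u - m k‖ ^ 2 / (2 * σ ^ 2))) * r j e))
      (nhdsWithin 0 (Set.Ioi 0)) (nhds (shannonEntropy (r jstar))) ∧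
    shannonEntropy (r jstar) ≤ shannonEntropy (r i) := by
  refine ⟨?_, hent jstar⟩
  haveI : Nonempty (Fin N) := ⟨⟨0, hN⟩⟩
  set d : Fin N → ℝ := fun j => ‖u - m j‖ ^ 2 with hdd
  have hdlt : ∀ j, j ≠ jstar → d jstar < d j := by
    intro j hj
    exact pow_lt_pow_left₀ (hmin j hj) (norm_nonneg _) two_ne_zero
  set g : ℝ → Fin N → ℝ := fun σ j => w j * Real.exp (-(d j - d jstar) / (2 * σ ^ 2)) with hg
  -- each g tends to indicator
  have hgt : ∀ j, Tendsto (fun σ => g σ j) (nhdsWithin 0 (Set.Ioi 0))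
      (nhds (if j = jstar then w jstar else 0)) := by
    intro j
    by_cases hj : j = jstar
    · subst hj
      simp only [g, sub_self, neg_zero, zero_div, Real.exp_zero, mul_one, if_pos rfl]
      exact tendsto_const_nhds
    · simp only [hg, if_neg hj]
      have ha : 0 < d j - d jstar := sub_pos.2 (hdlt j hj)
      have h1 : Tendsto (fun σ : ℝ => (2 * σ ^ 2)⁻¹) (nhdsWithin 0 (Set.Ioi 0)) atTop := by
        apply tendsto_inv_nhdsGT_zero.comp
        apply tendsto_nhdsWithin_of_tendsto_nhds_of_eventually_within
        · have : Tendsto (fun σ : ℝ => 2 * σ ^ 2) (nhds 0) (nhds (2 * 0 ^ 2)) := by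
            exact (continuous_const.mul (continuous_pow 2)).tendsto 0
          simpa using this.mono_left nhdsWithin_le_nhds
        · filter_upwards [self_mem_nhdsWithin] with x hx
          have h0 : (0:ℝ) < x := hx
          exact Set.mem_Ioi.2 (by positivity)
      have h2 : Tendsto (fun σ : ℝ => (d j - d jstar) / (2 * σ ^ 2))
          (nhdsWithin 0 (Set.Ioi 0)) atTop := by
        simp only [div_eq_mul_inv]
        exact h1.const_mul_atTop ha
      have h3 : Tendsto (fun σ : ℝ => Real.exp (-(d j - d jstar) / (2 * σ ^ 2)))
          (nhdsWithin 0 (Set.Ioi 0)) (nhds 0) := by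
        have h3' := Real.tendsto_exp_atBot.comp (tendsto_neg_atTop_atBot.comp h2)
        refine h3'.congr fun σ => ?_
        simp only [Function.comp]
        ring_nf
      simpa using h3.const_mul (w j)
  have hSgt : Tendsto (fun σ => ∑ k, g σ k) (nhdsWithin 0 (Set.Ioi 0)) (nhds (w jstar)) := by
    have := tendsto_finset_sum Finset.univ (fun k _ => hgt k)
    simpa using this
  -- q equals g-ratio on (0,∞)
  have heq : ∀ᶠ σ : ℝ in nhdsWithin 0 (Set.Ioi 0), ∀ j : Fin N,
      w j * Real.exp (-d j / (2 * σ ^ 2)) / ∑ k, w k * Real.exp (-d k / (2 * σ ^ 2))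
        = g σ j / ∑ k, g σ k := by
    filter_upwards [self_mem_nhdsWithin] with σ hσ j
    have hc : Real.exp (d jstar / (2 * σ ^ 2)) ≠ 0 := Real.exp_ne_zero _
    have hterm : ∀ k, g σ k = w k * Real.exp (-d k / (2 * σ ^ 2)) * Real.exp (d jstar / (2 * σ ^ 2)) := by
      intro k
      rw [hg]
      rw [mul_assoc, ← Real.exp_add]
      ring_nf
    rw [hterm j, show (∑ k, g σ k) = (∑ k, w k * Real.exp (-d k / (2 * σ ^ 2))) * Real.exp (d jstar / (2 * σ ^ 2)) by
      rw [Finset.sum_mul]; exact Finset.sum_congr rfl fun k _ => hterm k]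
    rw [mul_div_mul_right _ _ hc]
  have hq : ∀ j : Fin N, Tendsto (fun σ : ℝ =>
      w j * Real.exp (-d j / (2 * σ ^ 2)) / ∑ k, w k * Real.exp (-d k / (2 * σ ^ 2)))
      (nhdsWithin 0 (Set.Ioi 0)) (nhds (if j = jstar then 1 else 0)) := by
    intro j
    have hdiv : Tendsto (fun σ => g σ j / ∑ k, g σ k) (nhdsWithin 0 (Set.Ioi 0))
        (nhds ((if j = jstar then w jstar else 0) / w jstar)) :=
      (hgt j).div hSgt (ne_of_gt (hw jstar))
    have : ((if j = jstar then w jstar else 0) / w jstar) = (if j = jstar then 1 else 0) := by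
      by_cases hj : j = jstar <;> simp [hj, div_self (ne_of_gt (hw jstar))]
    rw [this] at hdiv
    exact hdiv.congr' ((heq.mono fun σ h => (h j).symm))
  have hp : ∀ e : Fin E, Tendsto (fun σ : ℝ =>
      ∑ j, (w j * Real.exp (-d j / (2 * σ ^ 2)) / ∑ k, w k * Real.exp (-d k / (2 * σ ^ 2))) * r j e)
      (nhdsWithin 0 (Set.Ioi 0)) (nhds (r jstar e)) := by
    intro e
    have := tendsto_finset_sum Finset.univ (fun j (_ : j ∈ Finset.univ) => (hq j).mul_const (r j e))
    have hsum : (∑ j, (if j = jstar then (1:ℝ) else 0) * r j e) = r jstar e := by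
      simp [ite_mul]
    rwa [hsum] at this
  have := tendsto_finset_sum Finset.univ (fun e (_ : e ∈ Finset.univ) =>
    (Real.continuous_mul_log.tendsto (r jstar e)).comp (hp e))
  unfold shannonEntropy
  exact this.neg
end
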